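/- Let (X,d) be a metric space and endow X×ℝ with the distance d̃((x,t),(y,s)) = sqrt(d(x,y)² + (t−s)²). Let μ be a locally finite Borel measure on X×ℝ, n ≥ 1 an integer, Σ ⊆ X×ℝ Borel, f̄: X → ℝ, A ⊆ X, and let Σ' ⊆ Σ be a Borel set with Σ' ⊆ {(x, f̄(x)) : x ∈ A} and with the restriction of f̄ to A continuous. Let γ > 0 and r₀ ∈ (0,1) satisfy Σ' ∩ B_{r₀}(p) ⊆ C_{2γ}(p) for every p ∈ Σ', and let j > 0 satisfy limsup_{r→0} μ(Σ ∩ B_r(p))/(ω_n rⁿ) ≤ j for every p ∈ Σ'. Set λ := sqrt(1+4γ²). Then for every p = (x, f̄(x)) ∈ Σ' one has limsup_{r→0} μ(Σ' ∩ (B_r(x)×ℝ))/(ω_n rⁿ) ≤ λⁿ·j, and consequently μ(Σ') ≤ (2λ)ⁿ·j·Hⁿ(π¹(Σ')), where π¹: X×ℝ → X is the projection and Hⁿ is the n-dimensional Hausdorff measure on X. -/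

import Mathlib

open MeasureTheory Filter Set Metric Topology
open scoped ENNReal NNReal

noncomputable section

/-- `ω_k = π^{k/2} / Γ(1 + k/2)`, the volume of the unit ball of `ℝ^k` for integer `k`. -/
def omegaN (k : ℕ) : ℝ := Real.pi ^ ((k : ℝ) / 2) / Real.Gamma ((k : ℝ) / 2 + 1)

/-- The `n`-dimensional Hausdorff measure with the geometric normalization of the paper,
`Hⁿ(E) = lim_δ inf { Σ_i ω_n (diam E_i / 2)ⁿ }`; it equals `(ω_n/2ⁿ)` times Mathlib's
`μH[n]` (which uses the gauge `diamⁿ`). -/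
def hausdorffPaper (X : Type*) [EMetricSpace X] [MeasurableSpace X] [BorelSpace X]
    (n : ℕ) : Measure X :=
  ENNReal.ofReal (omegaN n / 2 ^ n) • μH[(n : ℝ)]

/-- The ℓ² product distance on `X × ℝ`:
`d̃((x,t),(y,s)) = sqrt(d(x,y)² + (t−s)²)`. -/
def dist2 {X : Type*} [PseudoMetricSpace X] (p q : X × ℝ) : ℝ :=
  Real.sqrt (dist p.1 q.1 ^ 2 + (p.2 - q.2) ^ 2)

/-- Balls in `X × ℝ` with respect to the ℓ² product distance. -/
def ball2 {X : Type*} [PseudoMetricSpace X] (p : X × ℝ) (r : ℝ) : Set (X × ℝ) :=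
  {q | dist2 p q < r}

/-- The cone `C_γ(p) = {(y,s) ∈ X × ℝ : γ·d(y,x) ≥ |s − t|}` for `p = (x,t)`. -/
def cone {X : Type*} [PseudoMetricSpace X] (γ : ℝ) (p : X × ℝ) : Set (X × ℝ) :=
  {q | |q.2 - p.2| ≤ γ * dist q.1 p.1}

lemma omegaN_pos (k : ℕ) : 0 < omegaN k := by
  unfold omegaN
  exact div_pos (Real.rpow_pos_of_pos Real.pi_pos _) (Real.Gamma_pos_of_pos (by positivity))

lemma div_ofReal_mul (a : ℝ≥0∞) {u v : ℝ} (hu : 0 < u) (hv : 0 < v) :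
    a / ENNReal.ofReal (u * v) * ENNReal.ofReal v = a / ENNReal.ofReal u := by
  have hv0 : ENNReal.ofReal v ≠ 0 := (ENNReal.ofReal_pos.2 hv).ne'
  have hu0 : ENNReal.ofReal u ≠ 0 := (ENNReal.ofReal_pos.2 hu).ne'
  rw [ENNReal.ofReal_mul hu.le, div_eq_mul_inv,
    ENNReal.mul_inv (Or.inl hu0) (Or.inl ENNReal.ofReal_ne_top), mul_assoc, mul_assoc,
    ENNReal.inv_mul_cancel hv0 ENNReal.ofReal_ne_top, mul_one, ← div_eq_mul_inv]

lemma map_const_mul_nhdsWithin_Ioi {lam : ℝ} (h : 0 < lam) :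
    map (fun r : ℝ => lam * r) (𝓝[>] (0:ℝ)) = 𝓝[>] (0:ℝ) := by
  have key : ∀ c : ℝ, 0 < c → Tendsto (fun r : ℝ => c * r) (𝓝[>] (0:ℝ)) (𝓝[>] (0:ℝ)) := by
    intro c hc
    rw [tendsto_nhdsWithin_iff]
    constructor
    · have : Tendsto (fun r : ℝ => c * r) (𝓝 (0:ℝ)) (𝓝 (c * 0)) :=
        (continuous_const.mul continuous_id).tendsto 0
      simpa using this.mono_left nhdsWithin_le_nhds
    · filter_upwards [self_mem_nhdsWithin] with r hr
      exact mul_pos hc hr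
  refine le_antisymm (key lam h) ?_
  have h2 := map_mono (m := fun r : ℝ => lam * r) (key lam⁻¹ (by positivity))
  have hcomp : (fun r : ℝ => lam * r) ∘ (fun r : ℝ => lam⁻¹ * r) = id := by
    funext r; simp [Function.comp, ← mul_assoc, mul_inv_cancel₀ h.ne']
  rwa [map_map, hcomp, map_id] at h2


lemma measure_le_hausdorff_of_density {X : Type*} [MetricSpace X] [MeasurableSpace X]
    [BorelSpace X] (ν : Measure X) {n : ℕ} (hn : 1 ≤ n) (E : Set X) {c : ℝ≥0∞}
    (hc0 : c ≠ 0) (hctop : c ≠ ⊤)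
    (h : ∀ x ∈ E, limsup (fun r : ℝ => ν (Metric.ball x r) / ENNReal.ofReal (r ^ n))
        (𝓝[>] (0 : ℝ)) ≤ c) :
    ν E ≤ c * μH[(n : ℝ)] E := by
  set M := μH[(n : ℝ)] E with hM
  rcases eq_or_ne M ⊤ with hMtop | hMtop
  · rw [hMtop, ENNReal.mul_top hc0]; exact le_top
  have key : ∀ ε : ℝ, 0 < ε →
      ν E ≤ (c + ENNReal.ofReal ε) * ENNReal.ofReal ((1 + ε) ^ n) * M := by
    intro ε hε
    set c' := c + ENNReal.ofReal ε with hc'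
    have hc'top : c' ≠ ⊤ := by
      simp [hc', ENNReal.add_ne_top, hctop, ENNReal.ofReal_ne_top]
    have hc'0 : c' ≠ 0 := by
      simp only [hc', ne_eq, add_eq_zero]
      tauto
    have hcc' : c < c' := ENNReal.lt_add_right hctop (by simp [ENNReal.ofReal_eq_zero]; linarith)
    set Ek : ℕ → Set X := fun k => {x | x ∈ E ∧ ∀ r : ℝ, 0 < r → r ≤ 1 / ((k : ℝ) + 1) →
        ν (Metric.ball x r) ≤ c' * ENNReal.ofReal (r ^ n)} with hEk
    have hmono : Monotone Ek := by
      intro k l hkl x hx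
      refine ⟨hx.1, fun r hr hrle => hx.2 r hr (hrle.trans ?_)⟩
      have : (k : ℝ) + 1 ≤ (l : ℝ) + 1 := by exact_mod_cast Nat.succ_le_succ hkl
      exact one_div_le_one_div_of_le (by positivity) this
    have hcover : E ⊆ ⋃ k, Ek k := by
      intro x hx
      have hlt := eventually_lt_of_limsup_lt (lt_of_le_of_lt (h x hx) hcc')
      rcases mem_nhdsGT_iff_exists_Ioc_subset.mp hlt with ⟨u, hu, hsub⟩
      obtain ⟨k, hk⟩ := exists_nat_one_div_lt (mem_Ioi.mp hu)
      refine mem_iUnion.2 ⟨k, hx, fun r hr hrle => ?_⟩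
      have hmem := hsub ⟨hr, hrle.trans hk.le⟩
      have hb0 : ENNReal.ofReal (r ^ n) ≠ 0 :=
        (ENNReal.ofReal_pos.2 (by positivity)).ne'
      exact (ENNReal.div_le_iff_le_mul (Or.inl hb0) (Or.inl ENNReal.ofReal_ne_top)).mp
        (le_of_lt hmem)
    have hsup : ν E ≤ ⨆ k, ν (Ek k) :=
      (measure_mono hcover).trans_eq hmono.measure_iUnion
    refine hsup.trans (iSup_le fun k => ?_)
    set C := c' * ENNReal.ofReal ((1 + ε) ^ n) with hC
    have hC0 : C ≠ 0 := by
      simp only [hC, ne_eq, mul_eq_zero, ENNReal.ofReal_eq_zero, not_or, not_le]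
      exact ⟨hc'0, by positivity⟩
    have hCtop : C ≠ ⊤ := ENNReal.mul_ne_top hc'top ENNReal.ofReal_ne_top
    set δr : ℝ := (1 / ((k : ℝ) + 1)) / (1 + ε) with hδr
    have hδrpos : 0 < δr := by positivity
    have hMge : (⨅ (t : ℕ → Set X) (_ : E ⊆ ⋃ i, t i)
        (_ : ∀ i, EMetric.diam (t i) ≤ ENNReal.ofReal δr),
        ∑' i, ⨆ _ : (t i).Nonempty, EMetric.diam (t i) ^ (n : ℝ)) ≤ M := by
      rw [hM, Measure.hausdorffMeasure_apply]
      exact le_iSup₂ (f := fun (r : ℝ≥0∞) (_ : 0 < r) =>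
        ⨅ (t : ℕ → Set X) (_ : E ⊆ ⋃ i, t i) (_ : ∀ i, EMetric.diam (t i) ≤ r),
          ∑' i, ⨆ _ : (t i).Nonempty, EMetric.diam (t i) ^ (n : ℝ))
        (ENNReal.ofReal δr) (ENNReal.ofReal_pos.2 hδrpos)
    refine le_trans ?_ (mul_le_mul_right hMge C)
    simp only [ENNReal.mul_iInf_of_ne hC0 hCtop]
    refine le_iInf fun t => le_iInf fun hcov => le_iInf fun hsmall => ?_
    rw [← ENNReal.tsum_mul_left]
    have hEkcov : Ek k ⊆ ⋃ i, (t i ∩ Ek k) := by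
      intro x hx
      rcases mem_iUnion.1 (hcov hx.1) with ⟨i, hi⟩
      exact mem_iUnion.2 ⟨i, hi, hx⟩
    refine (measure_mono hEkcov).trans
      ((measure_iUnion_le _).trans (ENNReal.tsum_le_tsum fun i => ?_))
    rcases (t i ∩ Ek k).eq_empty_or_nonempty with hemp | ⟨x, hxt, hxE⟩
    · simp [hemp]
    have hne : (t i).Nonempty := ⟨x, hxt⟩
    rw [iSup_pos hne]
    have hdiam := hsmall i
    have hdtop : EMetric.diam (t i) ≠ ⊤ := (hdiam.trans_lt ENNReal.ofReal_lt_top).ne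
    set d : ℝ := (EMetric.diam (t i)).toReal with hd
    have hd0 : (0:ℝ) ≤ d := ENNReal.toReal_nonneg
    have hdle : d ≤ δr := ENNReal.toReal_le_of_le_ofReal hδrpos.le hdiam
    have hsubcb : t i ⊆ Metric.closedBall x d := by
      intro y hy
      have h1 : edist y x ≤ EMetric.diam (t i) := EMetric.edist_le_diam_of_mem hy hxt
      have h2 : edist y x ≠ ⊤ := (h1.trans_lt (lt_top_iff_ne_top.2 hdtop)).ne
      rw [Metric.mem_closedBall, dist_edist, hd]
      exact (ENNReal.toReal_le_toReal h2 hdtop).mpr h1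
    rcases eq_or_lt_of_le hd0 with hd0' | hdpos
    · -- diam zero
      have hdiam0 : EMetric.diam (t i) = 0 := by
        rw [← ENNReal.ofReal_toReal hdtop, ← hd, ← hd0', ENNReal.ofReal_zero]
      have hsingle : t i ⊆ {x} := by
        intro y hy
        have := hsubcb hy
        simpa [← hd0', Metric.closedBall_zero] using this
      have hx0 : ν {x} = 0 := by
        refine le_antisymm ?_ zero_le
        have h1 : Tendsto (fun r : ℝ => ENNReal.ofReal (r ^ n)) (𝓝[>] (0:ℝ)) (𝓝 0) := by
          have hco : Continuous fun r : ℝ => ENNReal.ofReal (r ^ n) :=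
            ENNReal.continuous_ofReal.comp (continuous_pow n)
          have := (hco.tendsto 0).mono_left (nhdsWithin_le_nhds (s := Ioi (0:ℝ)))
          simpa [zero_pow (by omega : n ≠ 0)] using this
        have hF : Tendsto (fun r : ℝ => c' * ENNReal.ofReal (r ^ n)) (𝓝[>] (0:ℝ)) (𝓝 0) := by
          simpa using ENNReal.Tendsto.const_mul h1 (Or.inr hc'top)
        refine ge_of_tendsto hF ?_
        filter_upwards [Ioc_mem_nhdsGT_of_mem
          (show (0:ℝ) ∈ Ico (0:ℝ) (1 / ((k : ℝ) + 1)) from ⟨le_refl _, by positivity⟩)] with r hr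
        exact (measure_mono (singleton_subset_iff.2 (Metric.mem_ball_self hr.1))).trans
          (hxE.2 r hr.1 hr.2)
      calc ν (t i ∩ Ek k) ≤ ν {x} := measure_mono fun y hy => hsingle hy.1
        _ = 0 := hx0
        _ ≤ _ := zero_le
    · -- positive diameter
      have hball : t i ⊆ Metric.ball x ((1 + ε) * d) :=
        hsubcb.trans (Metric.closedBall_subset_ball (by nlinarith))
      have hr1 : 0 < (1 + ε) * d := by positivity
      have hr2 : (1 + ε) * d ≤ 1 / ((k : ℝ) + 1) := by
        calc (1 + ε) * d ≤ (1 + ε) * δr := by nlinarith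
          _ = 1 / ((k : ℝ) + 1) := by
              rw [hδr, mul_comm, div_mul_cancel₀]
              positivity
      have hbd := hxE.2 ((1 + ε) * d) hr1 hr2
      calc ν (t i ∩ Ek k) ≤ ν (Metric.ball x ((1 + ε) * d)) :=
            measure_mono fun y hy => hball hy.1
        _ ≤ c' * ENNReal.ofReal (((1 + ε) * d) ^ n) := hbd
        _ = C * EMetric.diam (t i) ^ (n : ℝ) := by
            rw [hC, mul_pow, ENNReal.ofReal_mul (by positivity), ← mul_assoc,
              ENNReal.rpow_natCast, ← ENNReal.ofReal_toReal hdtop, ← hd,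
              ← ENNReal.ofReal_pow hd0]
  -- take ε → 0
  have h1 : Tendsto (fun ε : ℝ => c + ENNReal.ofReal ε) (𝓝[>] (0:ℝ)) (𝓝 c) := by
    have h0 : Tendsto (fun ε : ℝ => ENNReal.ofReal ε) (𝓝[>] (0:ℝ)) (𝓝 0) := by
      simpa using (ENNReal.continuous_ofReal.tendsto 0).mono_left
        (nhdsWithin_le_nhds (s := Ioi (0:ℝ)))
    simpa using tendsto_const_nhds.add h0
  have h2 : Tendsto (fun ε : ℝ => ENNReal.ofReal ((1 + ε) ^ n)) (𝓝[>] (0:ℝ)) (𝓝 1) := by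
    have hco : Continuous fun ε : ℝ => ENNReal.ofReal ((1 + ε) ^ n) :=
      ENNReal.continuous_ofReal.comp ((continuous_const.add continuous_id).pow n)
    have := (hco.tendsto 0).mono_left (nhdsWithin_le_nhds (s := Ioi (0:ℝ)))
    simpa using this
  have h3 := ENNReal.Tendsto.mul h1 (Or.inr ENNReal.one_ne_top) h2 (Or.inl one_ne_zero)
  have h4 := ENNReal.Tendsto.mul h3 (Or.inr hMtop) (tendsto_const_nhds (x := M))
    (Or.inr (by simp [hctop]))
  rw [mul_one] at h4
  refine ge_of_tendsto h4 ?_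
  filter_upwards [self_mem_nhdsWithin] with ε hε using key ε hε


/-- Let `μ` be a locally finite Borel measure on `X × ℝ` (ℓ² product
distance), `Σ` Borel, `Σ' ⊆ Σ` Borel contained in the graph of `f̄` over `A`, with `f̄`
continuous on `A`. Assume the cone condition `Σ' ∩ B_{r₀}(p) ⊆ C_{2γ}(p)` for `p ∈ Σ'` and
the density bound `limsup_{r→0} μ(Σ ∩ B_r(p))/(ω_n rⁿ) ≤ j` for `p ∈ Σ'`. Then, with
`λ = sqrt(1+4γ²)`, for every `p = (x,f̄(x)) ∈ Σ'` one has
`limsup_{r→0} μ(Σ' ∩ (B_r(x)×ℝ))/(ω_n rⁿ) ≤ λⁿ·j`, and consequently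
`μ(Σ') ≤ (2λ)ⁿ·j·Hⁿ(π¹(Σ'))`. -/
theorem statement11
    {X : Type*} [MetricSpace X] [MeasurableSpace X] [BorelSpace X]
    (μ : Measure (X × ℝ))
    (hloc : ∀ p : X × ℝ, ∃ r : ℝ, 0 < r ∧ μ (ball2 p r) < ⊤)
    (n : ℕ) (hn : 1 ≤ n)
    (S : Set (X × ℝ)) (hS : MeasurableSet S)
    (fbar : X → ℝ) (A : Set X)
    (S' : Set (X × ℝ)) (hS' : MeasurableSet S') (hS'S : S' ⊆ S)
    (hgraph : S' ⊆ {p : X × ℝ | p.1 ∈ A ∧ p.2 = fbar p.1})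
    (hcont : ContinuousOn fbar A)
    (γ : ℝ) (hγ : 0 < γ) (r₀ : ℝ) (hr₀ : r₀ ∈ Set.Ioo (0 : ℝ) 1)
    (hcone : ∀ p ∈ S', S' ∩ ball2 p r₀ ⊆ cone (2 * γ) p)
    (j : ℝ) (hj : 0 < j)
    (hup : ∀ p ∈ S',
      limsup (fun r : ℝ => μ (S ∩ ball2 p r) / ENNReal.ofReal (omegaN n * r ^ n))
          (𝓝[>] (0 : ℝ)) ≤ ENNReal.ofReal j)
    (lam : ℝ) (hlam : lam = Real.sqrt (1 + 4 * γ ^ 2)) :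
    (∀ p ∈ S',
      limsup
          (fun r : ℝ =>
            μ (S' ∩ (Metric.ball p.1 r ×ˢ Set.univ)) / ENNReal.ofReal (omegaN n * r ^ n))
          (𝓝[>] (0 : ℝ)) ≤ ENNReal.ofReal (lam ^ n * j)) ∧
    μ S' ≤ ENNReal.ofReal ((2 * lam) ^ n * j) * hausdorffPaper X n (Prod.fst '' S') := by
  have hlam1 : (1:ℝ) ≤ lam := by
    rw [hlam]
    calc (1:ℝ) = Real.sqrt 1 := Real.sqrt_one.symm
      _ ≤ Real.sqrt (1 + 4 * γ ^ 2) := Real.sqrt_le_sqrt (by nlinarith)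
  have hlampos : (0:ℝ) < lam := lt_of_lt_of_le one_pos hlam1
  have hlamsq : lam ^ 2 = 1 + 4 * γ ^ 2 := by
    rw [hlam, Real.sq_sqrt (by positivity)]
  -- Part 1
  have part1 : ∀ p ∈ S',
      limsup
          (fun r : ℝ =>
            μ (S' ∩ (Metric.ball p.1 r ×ˢ Set.univ)) / ENNReal.ofReal (omegaN n * r ^ n))
          (𝓝[>] (0 : ℝ)) ≤ ENNReal.ofReal (lam ^ n * j) := by
    intro p hp
    obtain ⟨hpA, hpt⟩ := hgraph hp
    obtain ⟨δ₁, hδ₁, hδ⟩ := Metric.continuousWithinAt_iff.mp (hcont p.1 hpA) (r₀ / 2)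
      (by linarith [hr₀.1])
    set δ := min δ₁ (r₀ / 2) with hδdef
    have hδpos : 0 < δ := lt_min hδ₁ (by linarith [hr₀.1])
    have hsub : ∀ r : ℝ, 0 < r → r ≤ δ →
        S' ∩ (Metric.ball p.1 r ×ˢ Set.univ) ⊆ S ∩ ball2 p (lam * r) := by
      rintro r hr hrδ q ⟨hqS', hqball⟩
      obtain ⟨hqA, hqt⟩ := hgraph hqS'
      have hdq : dist q.1 p.1 < r := by
        simpa [Metric.mem_ball] using hqball.1
      have hrδ₁ : r ≤ δ₁ := hrδ.trans (min_le_left _ _)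
      have hrr₀ : r ≤ r₀ / 2 := hrδ.trans (min_le_right _ _)
      have hfq : dist (fbar q.1) (fbar p.1) < r₀ / 2 := hδ hqA (hdq.trans_le hrδ₁)
      have habs : |q.2 - p.2| < r₀ / 2 := by
        rw [hqt, hpt]
        simpa [Real.dist_eq] using hfq
      have hq_in : q ∈ ball2 p r₀ := by
        show dist2 p q < r₀
        unfold dist2
        have hdcomm : dist p.1 q.1 = dist q.1 p.1 := dist_comm _ _
        have hsum : dist p.1 q.1 ^ 2 + (p.2 - q.2) ^ 2 < r₀ ^ 2 := by
          have h1 : dist q.1 p.1 < r₀ / 2 := hdq.trans_le hrr₀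
          have h2 := abs_nonneg (q.2 - p.2)
          have h3 := dist_nonneg (x := q.1) (y := p.1)
          have h4 := sq_abs (q.2 - p.2)
          nlinarith [hr₀.1]
        calc Real.sqrt (dist p.1 q.1 ^ 2 + (p.2 - q.2) ^ 2)
            < Real.sqrt (r₀ ^ 2) := Real.sqrt_lt_sqrt (by positivity) hsum
          _ = r₀ := Real.sqrt_sq hr₀.1.le
      have hqcone : |q.2 - p.2| ≤ 2 * γ * dist q.1 p.1 := hcone p hp ⟨hqS', hq_in⟩
      refine ⟨hS'S hqS', ?_⟩
      show dist2 p q < lam * r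
      unfold dist2
      have hdcomm : dist p.1 q.1 = dist q.1 p.1 := dist_comm _ _
      have hsum : dist p.1 q.1 ^ 2 + (p.2 - q.2) ^ 2 < (lam * r) ^ 2 := by
        have h2 := abs_nonneg (q.2 - p.2)
        have h3 := dist_nonneg (x := q.1) (y := p.1)
        have h4 := sq_abs (q.2 - p.2)
        have h5 := mul_self_le_mul_self h2 hqcone
        have h6 := mul_self_lt_mul_self h3 hdq
        nlinarith [sq_nonneg γ, hγ.le]
      calc Real.sqrt (dist p.1 q.1 ^ 2 + (p.2 - q.2) ^ 2)
          < Real.sqrt ((lam * r) ^ 2) := Real.sqrt_lt_sqrt (by positivity) hsum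
        _ = lam * r := Real.sqrt_sq (by positivity)
    set g : ℝ → ℝ≥0∞ := fun s => μ (S ∩ ball2 p s) / ENNReal.ofReal (omegaN n * s ^ n)
      with hg
    have hev : ∀ᶠ r in 𝓝[>] (0:ℝ),
        μ (S' ∩ (Metric.ball p.1 r ×ˢ Set.univ)) / ENNReal.ofReal (omegaN n * r ^ n)
          ≤ ENNReal.ofReal (lam ^ n) * g (lam * r) := by
      filter_upwards [Ioc_mem_nhdsGT_of_mem
        (show (0:ℝ) ∈ Ico (0:ℝ) δ from ⟨le_refl _, hδpos⟩)] with r hr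
      have hu : 0 < omegaN n * r ^ n := mul_pos (omegaN_pos n) (pow_pos hr.1 n)
      have hv : 0 < lam ^ n := pow_pos hlampos n
      have hmono : μ (S' ∩ (Metric.ball p.1 r ×ˢ Set.univ)) ≤ μ (S ∩ ball2 p (lam * r)) :=
        measure_mono (hsub r hr.1 hr.2)
      refine (ENNReal.div_le_div_right hmono (ENNReal.ofReal (omegaN n * r ^ n))).trans ?_
      rw [mul_comm (ENNReal.ofReal (lam ^ n))]
      simp only [hg]
      have harg : omegaN n * (lam * r) ^ n = omegaN n * r ^ n * lam ^ n := by ring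
      rw [harg]
      exact le_of_eq (div_ofReal_mul _ hu hv).symm
    have hmap := map_const_mul_nhdsWithin_Ioi hlampos
    have hls2 : limsup (fun r : ℝ => g (lam * r)) (𝓝[>] (0:ℝ)) = limsup g (𝓝[>] (0:ℝ)) := by
      rw [show (fun r : ℝ => g (lam * r)) = g ∘ (fun r : ℝ => lam * r) from rfl,
        limsup_comp, hmap]
    have hfin := limsup_le_limsup hev
    rw [ENNReal.limsup_const_mul_of_ne_top (u := fun r : ℝ => g (lam * r))
      ENNReal.ofReal_ne_top, hls2] at hfin
    refine hfin.trans ?_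
    refine le_trans (mul_le_mul_right (hup p hp) _) ?_
    exact ((ENNReal.ofReal_mul (by positivity)).symm).le
  refine ⟨part1, ?_⟩
  -- Part 2
  set ν : Measure X := (μ.restrict S').map Prod.fst with hν
  set E : Set X := Prod.fst '' S' with hE
  have hνball : ∀ (x : X) (r : ℝ),
      ν (Metric.ball x r) = μ (S' ∩ (Metric.ball x r ×ˢ Set.univ)) := by
    intro x r
    rw [hν, Measure.map_apply measurable_fst measurableSet_ball,
      Measure.restrict_apply (measurable_fst measurableSet_ball), Set.prod_univ,
      Set.inter_comm]
  have hcpos : 0 < omegaN n * (lam ^ n * j) :=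
    mul_pos (omegaN_pos n) (mul_pos (pow_pos hlampos n) hj)
  have hdens : ∀ x ∈ E,
      limsup (fun r : ℝ => ν (Metric.ball x r) / ENNReal.ofReal (r ^ n)) (𝓝[>] (0:ℝ))
        ≤ ENNReal.ofReal (omegaN n * (lam ^ n * j)) := by
    intro x hx
    obtain ⟨p, hp, hpx⟩ := hx
    have h1 := part1 p hp
    have hev : ∀ᶠ r in 𝓝[>] (0:ℝ),
        ν (Metric.ball x r) / ENNReal.ofReal (r ^ n)
          = ENNReal.ofReal (omegaN n) *
            (μ (S' ∩ (Metric.ball p.1 r ×ˢ Set.univ)) /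
              ENNReal.ofReal (omegaN n * r ^ n)) := by
      filter_upwards [self_mem_nhdsWithin] with r hr
      rw [hνball, hpx]
      have harg : omegaN n * r ^ n = r ^ n * omegaN n := by ring
      rw [harg, mul_comm (ENNReal.ofReal (omegaN n)),
        div_ofReal_mul _ (pow_pos hr n) (omegaN_pos n)]
    rw [limsup_congr hev, ENNReal.limsup_const_mul_of_ne_top ENNReal.ofReal_ne_top]
    refine le_trans (mul_le_mul_right h1 _) ?_
    exact ((ENNReal.ofReal_mul (omegaN_pos n).le).symm).le
  have hkey := measure_le_hausdorff_of_density ν hn E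
    (c := ENNReal.ofReal (omegaN n * (lam ^ n * j)))
    (ENNReal.ofReal_pos.2 hcpos).ne' ENNReal.ofReal_ne_top hdens
  have hμν : μ S' ≤ ν E := by
    have h1 : S' ⊆ Prod.fst ⁻¹' E := fun q hq => ⟨q, hq, rfl⟩
    calc μ S' = μ.restrict S' S' := by rw [Measure.restrict_apply hS', Set.inter_self]
      _ ≤ μ.restrict S' (Prod.fst ⁻¹' E) := measure_mono h1
      _ ≤ ν E := Measure.le_map_apply measurable_fst.aemeasurable E
  refine hμν.trans (hkey.trans ?_)
  have hconst : ENNReal.ofReal (omegaN n * (lam ^ n * j))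
      = ENNReal.ofReal ((2 * lam) ^ n * j) * ENNReal.ofReal (omegaN n / 2 ^ n) := by
    rw [← ENNReal.ofReal_mul (mul_nonneg (pow_nonneg (by linarith) n) hj.le)]
    congr 1
    field_simp
    ring
  rw [hausdorffPaper, Measure.smul_apply, smul_eq_mul, hconst, mul_assoc]

end
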